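/- Let F be C² on [-1,1], and define I(z) = V⁽⁻²⁾(z) + h⁽⁻²⁾(z) + V⁽⁻¹⁾(z)h⁽⁻¹⁾(z), where V⁽⁻¹⁾ = (1/2)F(1-z²), h⁽⁻¹⁾ = -Fz² + (1/2)F'z(1-z²), V⁽⁻²⁾ = -(3/2)Fz(1-z²) + (1/4)F'(1-z²)² - (1/8)F²(1-z²)², and h⁽⁻²⁾ = (1/4)F''z(1-z²)² - (F'/2)(-1 + 6z² - 5z⁴) + (F/2)(9z³ - 7z) + (F²/4)(6z² - 7z⁴) - FF'[(1/2)z(1-z²)² - (1/4)z³(1-z²)]. Then ∫_{-1}^{1} I(z) dz = ∫_{-1}^{1} [-F(z)z + (1/8)F(z)²z²(1-z²)] dz. -/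

import Mathlib

open Set intervalIntegral

/-- For `F` of class `C²` on `[-1,1]`, with the explicitly computed Vaidya
expansion coefficients `V⁽⁻¹⁾, h⁽⁻¹⁾, V⁽⁻²⁾, h⁽⁻²⁾`, the integral of
`I = V⁽⁻²⁾ + h⁽⁻²⁾ + V⁽⁻¹⁾ h⁽⁻¹⁾` over `[-1,1]` equals
`∫_{-1}^{1} [-F z + (1/8)F² z²(1-z²)] dz`. -/
theorem integral_I_eq (F F' F'' : ℝ → ℝ)
    (hF : ∀ z ∈ Icc (-1 : ℝ) 1, HasDerivAt F (F' z) z)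
    (hF' : ∀ z ∈ Icc (-1 : ℝ) 1, HasDerivAt F' (F'' z) z)
    (hF'' : ContinuousOn F'' (Icc (-1 : ℝ) 1)) :
    ∫ z in (-1 : ℝ)..1,
        ((-(3 / 2) * F z * z * (1 - z ^ 2) + (1 / 4) * F' z * (1 - z ^ 2) ^ 2
            - (1 / 8) * (F z) ^ 2 * (1 - z ^ 2) ^ 2)
          + ((1 / 4) * F'' z * z * (1 - z ^ 2) ^ 2
            - (F' z / 2) * (-1 + 6 * z ^ 2 - 5 * z ^ 4)
            + (F z / 2) * (9 * z ^ 3 - 7 * z)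
            + ((F z) ^ 2 / 4) * (6 * z ^ 2 - 7 * z ^ 4)
            - F z * F' z * ((1 / 2) * z * (1 - z ^ 2) ^ 2
                - (1 / 4) * z ^ 3 * (1 - z ^ 2)))
          + ((1 / 2) * F z * (1 - z ^ 2))
              * (-(F z) * z ^ 2 + (1 / 2) * F' z * z * (1 - z ^ 2)))
      = ∫ z in (-1 : ℝ)..1,
          (-(F z) * z + (1 / 8) * (F z) ^ 2 * z ^ 2 * (1 - z ^ 2)) := by
  have h11 : ((-1 : ℝ)) ≤ 1 := by norm_num
  have hu : uIcc (-1 : ℝ) 1 = Icc (-1 : ℝ) 1 := uIcc_of_le h11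
  -- continuity of F and F'
  have hFc : ContinuousOn F (Icc (-1 : ℝ) 1) :=
    fun z hz => (hF z hz).continuousAt.continuousWithinAt
  have hF'c : ContinuousOn F' (Icc (-1 : ℝ) 1) :=
    fun z hz => (hF' z hz).continuousAt.continuousWithinAt
  -- the two integrands
  set f : ℝ → ℝ := fun z =>
    ((-(3 / 2) * F z * z * (1 - z ^ 2) + (1 / 4) * F' z * (1 - z ^ 2) ^ 2
        - (1 / 8) * (F z) ^ 2 * (1 - z ^ 2) ^ 2)
      + ((1 / 4) * F'' z * z * (1 - z ^ 2) ^ 2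
        - (F' z / 2) * (-1 + 6 * z ^ 2 - 5 * z ^ 4)
        + (F z / 2) * (9 * z ^ 3 - 7 * z)
        + ((F z) ^ 2 / 4) * (6 * z ^ 2 - 7 * z ^ 4)
        - F z * F' z * ((1 / 2) * z * (1 - z ^ 2) ^ 2
            - (1 / 4) * z ^ 3 * (1 - z ^ 2)))
      + ((1 / 2) * F z * (1 - z ^ 2))
          * (-(F z) * z ^ 2 + (1 / 2) * F' z * z * (1 - z ^ 2))) with hf
  set g : ℝ → ℝ := fun z =>
    (-(F z) * z + (1 / 8) * (F z) ^ 2 * z ^ 2 * (1 - z ^ 2)) with hg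
  -- the antiderivative of f - g
  set G : ℝ → ℝ := fun z =>
    (1/4 * z - 1/2 * z ^ 3 + 1/4 * z ^ 5) * F' z
      + (1/2 - 2 * z ^ 2 + 3/2 * z ^ 4) * F z
      + (-(1/8) * z + 3/8 * z ^ 3 - 1/4 * z ^ 5) * (F z) ^ 2 with hGdef
  have hG : ∀ z ∈ uIcc (-1 : ℝ) 1, HasDerivAt G (f z - g z) z := by
    intro z hz
    rw [hu] at hz
    have h1 := hF z hz
    have h2 := hF' z hz
    have hp1 : HasDerivAt (fun z : ℝ => 1/4 * z - 1/2 * z ^ 3 + 1/4 * z ^ 5)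
        (1/4 - 3/2 * z ^ 2 + 5/4 * z ^ 4) z := by
      have h := (((hasDerivAt_id z).const_mul (1/4 : ℝ)).sub
          ((hasDerivAt_pow 3 z).const_mul (1/2 : ℝ))).add
          ((hasDerivAt_pow 5 z).const_mul (1/4 : ℝ))
      refine h.congr_deriv ?_
      push_cast; ring
    have hp2 : HasDerivAt (fun z : ℝ => 1/2 - 2 * z ^ 2 + 3/2 * z ^ 4)
        (-4 * z + 6 * z ^ 3) z := by
      have h := (((hasDerivAt_const z (1/2 : ℝ)).sub
          ((hasDerivAt_pow 2 z).const_mul (2 : ℝ))).add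
          ((hasDerivAt_pow 4 z).const_mul (3/2 : ℝ)))
      refine h.congr_deriv ?_
      push_cast; ring
    have hp3 : HasDerivAt (fun z : ℝ => -(1/8) * z + 3/8 * z ^ 3 - 1/4 * z ^ 5)
        (-(1/8) + 9/8 * z ^ 2 - 5/4 * z ^ 4) z := by
      have h := (((hasDerivAt_id z).const_mul (-(1/8) : ℝ)).add
          ((hasDerivAt_pow 3 z).const_mul (3/8 : ℝ))).sub
          ((hasDerivAt_pow 5 z).const_mul (1/4 : ℝ))
      refine h.congr_deriv ?_
      push_cast; ring
    have hD := (hp1.mul h2).add ((hp2.mul h1).add (hp3.mul (h1.pow 2)))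
    convert hD using 1
    · rfl
    · rfl
    · rw [hGdef]; funext x; simp only [Pi.mul_apply, Pi.add_apply, Pi.pow_apply]; ring
    · simp only [f, g, Pi.pow_apply]; push_cast; ring
  -- continuity of f and g on [-1,1]
  have hfc : ContinuousOn f (Icc (-1 : ℝ) 1) := by
    simp only [hf]; fun_prop
  have hgc : ContinuousOn g (Icc (-1 : ℝ) 1) := by
    simp only [hg]; fun_prop
  have hfi : IntervalIntegrable f MeasureTheory.volume (-1 : ℝ) 1 :=
    (hu ▸ hfc).intervalIntegrable
  have hgi : IntervalIntegrable g MeasureTheory.volume (-1 : ℝ) 1 :=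
    (hu ▸ hgc).intervalIntegrable
  have key : ∫ z in (-1 : ℝ)..1, (f z - g z) = G 1 - G (-1) :=
    integral_eq_sub_of_hasDerivAt hG (hfi.sub hgi)
  have hG0 : G 1 - G (-1) = 0 := by
    rw [hGdef]; norm_num
  rw [intervalIntegral.integral_sub hfi hgi, hG0] at key
  linarith
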